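/- Fix real constants A > 0, M ≥ 0, γ ≥ 0, ρ0 ∈ (0,1), and J > (M/(Aρ0))·(e^{Aγ} − 1). Let z : ℝ → ℝ be differentiable on [t_s, t_c] with z'(t) = A·z(t) + w(t) and |w(t)| ≤ M for all t ∈ [t_s, t_c], suppose |z(t_s)| = J and 0 ≤ t_c − t_s ≤ γ. If q ∈ ℝ satisfies |t_s − q| ≤ (1/A)·ln(1 + (ρ0 − (M/(J·A))·(e^{Aγ} − 1))/e^{Aγ}), then the controller estimate z̄ := sign(z(t_s))·J·e^{A(t_c − q)} satisfies |z(t_c) − z̄| ≤ ρ0·J. (Lemma 1.) -/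

import Mathlib

open Set Filter

/-- **Lemma 1.** If the quantized triggering time `q` satisfies
`|t_s − q| ≤ (1/A)·ln(1 + (ρ0 − (M/(J·A))(e^{Aγ}−1))/e^{Aγ})`,
then the controller estimate `z̄ = sign(z(t_s))·J·e^{A(t_c − q)}`
satisfies `|z(t_c) − z̄| ≤ ρ0·J`. -/
theorem quantized_time_jump_error
    (A M γ ρ0 J : ℝ) (z w : ℝ → ℝ) (ts tc q : ℝ)
    (hA : 0 < A) (hM : 0 ≤ M) (hγ : 0 ≤ γ)
    (hρ0 : 0 < ρ0) (hρ1 : ρ0 < 1)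
    (hJ : (M / (A * ρ0)) * (Real.exp (A * γ) - 1) < J)
    (hz : ∀ t ∈ Icc ts tc, HasDerivAt z (A * z t + w t) t)
    (hw : ∀ t ∈ Icc ts tc, |w t| ≤ M)
    (hzts : |z ts| = J)
    (hdelay0 : 0 ≤ tc - ts) (hdelayγ : tc - ts ≤ γ)
    (hq : |ts - q| ≤ (1 / A) *
      Real.log (1 + (ρ0 - (M / (J * A)) * (Real.exp (A * γ) - 1)) / Real.exp (A * γ))) :
    |z tc - Real.sign (z ts) * J * Real.exp (A * (tc - q))| ≤ ρ0 * J := by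
  set E : ℝ := Real.exp (A * γ) with hEdef
  have hE1 : 1 ≤ E := Real.one_le_exp (by positivity)
  have hEpos : 0 < E := lt_of_lt_of_le one_pos hE1
  have hJpos : 0 < J := by
    have h0 : 0 ≤ M / (A * ρ0) * (E - 1) := mul_nonneg (by positivity) (by linarith)
    linarith
  set ε : ℝ := ρ0 - (M / (J * A)) * (E - 1) with hεdef
  have hεpos : 0 < ε := by
    have h1 : M / (J * A) * (E - 1) < ρ0 := by
      rw [div_mul_eq_mul_div, div_lt_iff₀ (by positivity)]
      rw [div_mul_eq_mul_div, div_lt_iff₀ (by positivity)] at hJ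
      nlinarith
    simpa [hεdef] using sub_pos.mpr h1
  have hts_le_tc : ts ≤ tc := by linarith
  -- sign * J = z ts
  have hsz : Real.sign (z ts) * J = z ts := by
    rcases lt_trichotomy (z ts) 0 with h | h | h
    · rw [Real.sign_of_neg h, ← hzts, abs_of_neg h]; ring
    · rw [h, abs_zero] at hzts; linarith
    · rw [Real.sign_of_pos h, ← hzts, abs_of_pos h]; ring
  -- Grönwall for g t = z t - z ts * exp (A*(t-ts))
  set g : ℝ → ℝ := fun t => z t - z ts * Real.exp (A * (t - ts)) with hgdef
  have hgd : ∀ t ∈ Icc ts tc, HasDerivAt g (A * g t + w t) t := by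
    intro t ht
    have h1 : HasDerivAt (fun t => z ts * Real.exp (A * (t - ts)))
        (z ts * (Real.exp (A * (t - ts)) * A)) t := by
      have := ((((hasDerivAt_id t).sub_const ts).const_mul A).exp).const_mul (z ts)
      simpa using this
    have h2 := (hz t ht).sub h1
    convert h2 using 1
    · rfl
    · rfl
    · rw [hgdef]; rfl
    · simp only [hgdef]; ring
  have hgb : |g tc| ≤ M / A * (Real.exp (A * (tc - ts)) - 1) := by
    have hcont : ContinuousOn g (Icc ts tc) := fun t ht =>
      ((hgd t ht).continuousAt).continuousWithinAt
    have hderiv : ∀ t ∈ Ico ts tc, HasDerivWithinAt g (A * g t + w t) (Ici t) t :=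
      fun t ht => ((hgd t (Ico_subset_Icc_self ht)).hasDerivWithinAt)
    have hstart : ‖g ts‖ ≤ 0 := by
      simp [hgdef]
    have hbound : ∀ t ∈ Ico ts tc, ‖A * g t + w t‖ ≤ A * ‖g t‖ + M := by
      intro t ht
      have := hw t (Ico_subset_Icc_self ht)
      simp only [Real.norm_eq_abs]
      calc |A * g t + w t| ≤ |A * g t| + |w t| := abs_add_le _ _
        _ ≤ A * |g t| + M := by
            rw [abs_mul, abs_of_pos hA]
            linarith
    have := norm_le_gronwallBound_of_norm_deriv_right_le hcont hderiv hstart hbound tc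
      ⟨hts_le_tc, le_refl _⟩
    rw [gronwallBound_of_K_ne_0 (ne_of_gt hA)] at this
    simp only [Real.norm_eq_abs, zero_mul, zero_add] at this
    exact this
  -- quantization factor bound
  set u : ℝ := Real.exp (A * (ts - q)) with hudef
  have hB : (0:ℝ) < 1 + ε / E := by positivity
  have hAL : A * ((1 / A) * Real.log (1 + ε / E)) = Real.log (1 + ε / E) := by
    field_simp
  have hu_le : u ≤ 1 + ε / E := by
    have h1 : A * (ts - q) ≤ A * |ts - q| :=
      mul_le_mul_of_nonneg_left (le_abs_self _) hA.le
    have h2 : A * |ts - q| ≤ Real.log (1 + ε / E) := by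
      calc A * |ts - q| ≤ A * ((1 / A) * Real.log (1 + ε / E)) :=
            mul_le_mul_of_nonneg_left hq hA.le
        _ = _ := hAL
    calc u ≤ Real.exp (Real.log (1 + ε / E)) := Real.exp_le_exp.mpr (h1.trans h2)
      _ = 1 + ε / E := Real.exp_log hB
  have huinv_le : u⁻¹ ≤ 1 + ε / E := by
    have h1 : -(A * (ts - q)) ≤ A * |ts - q| := by
      rw [← mul_neg]
      exact mul_le_mul_of_nonneg_left (neg_le_abs _) hA.le
    have h2 : A * |ts - q| ≤ Real.log (1 + ε / E) := by
      calc A * |ts - q| ≤ A * ((1 / A) * Real.log (1 + ε / E)) :=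
            mul_le_mul_of_nonneg_left hq hA.le
        _ = _ := hAL
    rw [hudef, ← Real.exp_neg]
    calc Real.exp (-(A * (ts - q))) ≤ Real.exp (Real.log (1 + ε / E)) :=
          Real.exp_le_exp.mpr (h1.trans h2)
      _ = 1 + ε / E := Real.exp_log hB
  have hupos : 0 < u := Real.exp_pos _
  have habs_u : |1 - u| ≤ ε / E := by
    have h1 : 1 ≤ (1 + ε / E) * u := by
      have := (inv_le_iff_one_le_mul₀' hupos).mp huinv_le
      linarith [this]
    rw [abs_le]
    constructor
    · nlinarith
    · nlinarith [sq_nonneg (1 - u), div_pos hεpos hEpos]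
  -- combine
  have hexp_split : Real.exp (A * (tc - q)) = Real.exp (A * (tc - ts)) * u := by
    rw [hudef, ← Real.exp_add]
    ring_nf
  have hexp_le : Real.exp (A * (tc - ts)) ≤ E := by
    exact Real.exp_le_exp.mpr (mul_le_mul_of_nonneg_left hdelayγ hA.le)
  have hexp1 : 1 ≤ Real.exp (A * (tc - ts)) := Real.one_le_exp (by positivity)
  have key : z tc - Real.sign (z ts) * J * Real.exp (A * (tc - q)) =
      g tc + z ts * Real.exp (A * (tc - ts)) * (1 - u) := by
    rw [hsz, hexp_split]
    simp only [hgdef]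
    ring
  rw [key]
  have habs2 : |z ts * Real.exp (A * (tc - ts)) * (1 - u)| ≤ J * E * (ε / E) := by
    rw [abs_mul, abs_mul, hzts, abs_of_pos (Real.exp_pos _)]
    have h1 : J * Real.exp (A * (tc - ts)) ≤ J * E :=
      mul_le_mul_of_nonneg_left hexp_le hJpos.le
    exact mul_le_mul h1 habs_u (abs_nonneg _) (by positivity)
  have hfinal : M / A * (Real.exp (A * (tc - ts)) - 1) + J * E * (ε / E) ≤ ρ0 * J := by
    have hJE : J * E * (ε / E) = J * ε := by field_simp
    have hJε : J * ε = ρ0 * J - M / A * (E - 1) := by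
      rw [hεdef]
      field_simp
    have hMA : M / A * (Real.exp (A * (tc - ts)) - 1) ≤ M / A * (E - 1) := by
      apply mul_le_mul_of_nonneg_left (by linarith) (by positivity)
    rw [hJE, hJε]
    linarith
  calc |g tc + z ts * Real.exp (A * (tc - ts)) * (1 - u)|
      ≤ |g tc| + |z ts * Real.exp (A * (tc - ts)) * (1 - u)| := abs_add_le _ _
    _ ≤ M / A * (Real.exp (A * (tc - ts)) - 1) + J * E * (ε / E) := add_le_add hgb habs2
    _ ≤ ρ0 * J := hfinal
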